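/- Under Assumption 1, define z_t = P_β y_t + P_{β⊥} Δy_t. If {y_t} satisfies the time-varying VECM, then z_t satisfies the time-varying VAR(p) recursion z_t = Σ_{i=1}^{p} B_i(τ_t) z_{t−i} + u_t, and y_t admits the exact representation y_t = P_{β⊥} Σ_{j=1}^{t} z_j + P_β z_t + P_{β⊥} y_0 for every t ≥ 1. -/

import Mathlib

open MeasureTheory ProbabilityTheory Filter Matrix Set
open scoped BigOperators ENNReal NNReal Kronecker Topology

noncomputable section

/-! ### Generic auxiliary notions -/

/-- The four Moore–Penrose equations. -/
def IsMPInv {m n : Type*} [Fintype m] [Fintype n]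
    (A : Matrix m n ℝ) (B : Matrix n m ℝ) : Prop :=
  A * B * A = A ∧ B * A * B = B ∧ (A * B)ᵀ = A * B ∧ (B * A)ᵀ = B * A

open Classical in
/-- Moore–Penrose pseudoinverse (via choice; it exists and is unique for real matrices). -/
def mpinv {m n : Type*} [Fintype m] [Fintype n] (A : Matrix m n ℝ) : Matrix n m ℝ :=
  if h : ∃ B, IsMPInv A B then h.choose else 0

/-- Spectral (ℓ²-operator) norm of a real matrix. -/
def specNorm {m n : Type*} [Fintype m] [Fintype n] [DecidableEq n] (A : Matrix m n ℝ) : ℝ :=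
  ‖LinearMap.toContinuousLinearMap (Matrix.toEuclideanLin A)‖

open Classical in
/-- A square root of a positive semidefinite matrix (via choice). -/
def msqrt {q : Type*} [Fintype q] (A : Matrix q q ℝ) : Matrix q q ℝ :=
  if h : ∃ B : Matrix q q ℝ, B.PosSemidef ∧ B * B = A then h.choose else 0

/-- Convergence in distribution, via bounded continuous test functions. -/
def ConvDist {W : Type*} [MeasurableSpace W] (P : Measure W) {E : Type*}
    [MeasurableSpace E] [TopologicalSpace E] (X : ℕ → W → E) (μ : Measure E) : Prop :=
  ∀ f : BoundedContinuousFunction E ℝ,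
    Tendsto (fun T => ∫ w, f (X T w) ∂P) atTop (𝓝 (∫ x, f x ∂μ))

/-- A centered Gaussian law on `ι → ℝ` with covariance matrix `S`. -/
def IsCenteredGaussian {ι : Type*} [Fintype ι] (μ : Measure (ι → ℝ)) (S : Matrix ι ι ℝ) : Prop :=
  IsProbabilityMeasure μ ∧
    ∀ a : ι → ℝ, Measure.map (fun x => ∑ i, a i * x i) μ =
      gaussianReal 0 (Real.toNNReal (a ⬝ᵥ S.mulVec a))

/-- A mean-zero Gaussian process with independent increments on `[0,1]` whose covariance
matrix at time `v` is `Cf v`. -/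
def IsGaussianProcess {W : Type*} [MeasurableSpace W] (P : Measure W) {n : ℕ}
    (G : ℝ → W → Fin n → ℝ) (Cf : ℝ → Matrix (Fin n) (Fin n) ℝ) : Prop :=
  (∀ v, Measurable (G v)) ∧
  (∀ a : Fin n → ℝ, Measure.map (fun w => ∑ i, a i * G 0 w i) P = gaussianReal 0 0) ∧
  (∀ v ∈ Icc (0:ℝ) 1, ∀ v' ∈ Icc (0:ℝ) 1, v ≤ v' → ∀ a : Fin n → ℝ,
    Measure.map (fun w => ∑ i, a i * (G v' w i - G v w i)) P =
      gaussianReal 0 (Real.toNNReal (a ⬝ᵥ (Cf v' - Cf v).mulVec a))) ∧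
  (∀ (k : ℕ) (us : Fin (k + 1) → ℝ), Monotone us → (∀ i, us i ∈ Icc (0:ℝ) 1) →
    iIndepFun
      (fun i : Fin k => fun w q => G (us i.succ) w q - G (us i.castSucc) w q) P)

/-- Complexification of a real matrix. -/
def toC {m n : Type*} (A : Matrix m n ℝ) : Matrix m n ℂ := A.map fun x => (x : ℂ)

/-- Rescaled time `τ_t = t/T`. -/
def τt (T : ℕ) (t : ℤ) : ℝ := (t : ℝ) / (T : ℝ)

/-! ### Kernel constants -/

def ck (K : ℝ → ℝ) (k : ℕ) : ℝ := ∫ v in (-1:ℝ)..1, v ^ k * K v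
def vk (K : ℝ → ℝ) (k : ℕ) : ℝ := ∫ v in (-1:ℝ)..1, v ^ k * (K v) ^ 2
def CB (K : ℝ → ℝ) : ℝ := ∫ v in (0:ℝ)..2, (∫ r in (-1:ℝ)..(1 - v), K r * K (r + v)) ^ 2

/-! ### The time-varying VECM data -/

structure TVData where
  d : ℕ
  r0 : ℕ
  p0 : ℕ
  hd : 0 < d
  hr0d : r0 ≤ d
  hp0 : 1 ≤ p0
  Ω : Type
  mΩ : MeasurableSpace Ω
  P : @Measure Ω mΩ
  ε : ℤ → Ω → Fin d → ℝ
  α : ℝ → Matrix (Fin d) (Fin r0) ℝ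
  β : Matrix (Fin d) (Fin r0) ℝ
  Γ : ℕ → ℝ → Matrix (Fin d) (Fin d) ℝ
  ω : ℝ → Matrix (Fin d) (Fin d) ℝ
  αperp : ℝ → Matrix (Fin d) (Fin (d - r0)) ℝ
  βperp : Matrix (Fin d) (Fin (d - r0)) ℝ
  y : ℕ → ℤ → Ω → Fin d → ℝ
  δ : ℝ
  hδ : 4 < δ

attribute [instance] TVData.mΩ

namespace TVData

variable (M : TVData)

def Δy (T : ℕ) (t : ℤ) (w : M.Ω) : Fin M.d → ℝ :=
  fun i => M.y T t w i - M.y T (t - 1) w i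

def Pi' (s : ℝ) : Matrix (Fin M.d) (Fin M.d) ℝ := M.α s * (M.β)ᵀ

def u (T : ℕ) (t : ℤ) (w : M.Ω) : Fin M.d → ℝ := (M.ω (τt T t)).mulVec (M.ε t w)

/-- The time-varying VECM equation for sample size `T`. -/
def VECMeqAt (T : ℕ) : Prop :=
  ∀ t : ℤ, t ≤ (T : ℤ) → ∀ w : M.Ω,
    M.Δy T t w =
      (M.Pi' (τt T t)).mulVec (M.y T (t - 1) w) +
      (∑ j ∈ Finset.range (M.p0 - 1),
        (M.Γ j (τt T t)).mulVec (M.Δy T (t - 1 - (j : ℤ)) w)) +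
      M.u T t w

def VECMeq : Prop := ∀ T : ℕ, 1 ≤ T → M.VECMeqAt T

/-- `Γ_τ(1) = I - ∑ Γ_j(τ)`. -/
def ΓL1 (s : ℝ) : Matrix (Fin M.d) (Fin M.d) ℝ :=
  1 - ∑ j ∈ Finset.range (M.p0 - 1), M.Γ j s

/-- `Ω(τ) = ω(τ)ω(τ)ᵀ`. -/
def Ωm (s : ℝ) : Matrix (Fin M.d) (Fin M.d) ℝ := M.ω s * (M.ω s)ᵀ

def Pbeta : Matrix (Fin M.d) (Fin M.d) ℝ := M.β * ((M.β)ᵀ * M.β)⁻¹ * (M.β)ᵀ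
def Pbetaperp : Matrix (Fin M.d) (Fin M.d) ℝ :=
  M.βperp * ((M.βperp)ᵀ * M.βperp)⁻¹ * (M.βperp)ᵀ

/-- Natural filtration of the innovations. -/
def F (t : ℤ) : MeasurableSpace M.Ω :=
  ⨆ s : {s : ℤ // s ≤ t}, MeasurableSpace.comap (M.ε s) inferInstance

/-- Martingale-difference structure with conditionally standardized innovations. -/
def MDS : Prop :=
  (∀ t : ℤ, ∀ i, condExp (M.F (t - 1)) M.P (fun w => M.ε t w i) =ᵐ[M.P] fun _ => 0) ∧
  (∀ t : ℤ, ∀ i j, condExp (M.F (t - 1)) M.P (fun w => M.ε t w i * M.ε t w j)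
      =ᵐ[M.P] fun _ => if i = j then (1:ℝ) else 0)

open Polynomial in
/-- The matrix polynomial `C_τ(L)` (over `ℂ`). -/
def Cpoly (s : ℝ) : Matrix (Fin M.d) (Fin M.d) (Polynomial ℂ) :=
  ((1 - X : Polynomial ℂ)) • (1 : Matrix (Fin M.d) (Fin M.d) (Polynomial ℂ)) -
    (X : Polynomial ℂ) • ((M.Pi' s).map fun x => Polynomial.C (x : ℂ)) -
    ∑ j ∈ Finset.range (M.p0 - 1),
      (((1 - X) * X ^ (j + 1) : Polynomial ℂ)) • ((M.Γ j s).map fun x => Polynomial.C (x : ℂ))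

def βbar : Matrix (Fin M.d) (Fin M.r0) ℝ := M.β * ((M.β)ᵀ * M.β)⁻¹
def βperpbar : Matrix (Fin M.d) (Fin (M.d - M.r0)) ℝ :=
  M.βperp * ((M.βperp)ᵀ * M.βperp)⁻¹

/-- `Γ_τ(z) = I - ∑ Γ_j(τ) z^j` evaluated at a complex point. -/
def Γz (s : ℝ) (z : ℂ) : Matrix (Fin M.d) (Fin M.d) ℂ :=
  1 - ∑ j ∈ Finset.range (M.p0 - 1), z ^ (j + 1) • toC (M.Γ j s)

/-- `J = [β, β̄⊥]ᵀ`. -/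
def Jmat : Matrix (Fin M.r0 ⊕ Fin (M.d - M.r0)) (Fin M.d) ℝ :=
  (Matrix.fromCols M.β M.βperpbar)ᵀ

/-- The operator `B_τ(z) = J⁻¹ B*_τ(z) J = [Γ_τ(z)β̄(1-z) - α(τ)z, Γ_τ(z)β⊥] ⬝ J`. -/
def Bz (s : ℝ) (z : ℂ) : Matrix (Fin M.d) (Fin M.d) ℂ :=
  (Matrix.fromCols ((1 - z) • (M.Γz s z * toC M.βbar) - z • toC (M.α s))
      (M.Γz s z * toC M.βperp)) * toC M.Jmat

/-- `Ψ` is the family of coefficients of the power-series inverse `Ψ_τ(L) = B_τ(L)⁻¹`,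
well-defined on the closed unit disc. -/
def InvSeries (Ψ : ℕ → ℝ → Matrix (Fin M.d) (Fin M.d) ℝ) : Prop :=
  ∀ s ∈ Icc (0:ℝ) 1, ∀ z : ℂ, ‖z‖ ≤ 1 →
    (∀ i k, Summable fun j : ℕ => ((Ψ j s i k : ℝ) : ℂ) * z ^ j) ∧
    M.Bz s z * (Matrix.of fun i k => ∑' j : ℕ, ((Ψ j s i k : ℝ) : ℂ) * z ^ j) = 1

/-- The long-run matrix `Ψ_τ(1) = ∑_j Ψ_j(τ)`. -/
def Ψ1 (Ψ : ℕ → ℝ → Matrix (Fin M.d) (Fin M.d) ℝ) (s : ℝ) :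
    Matrix (Fin M.d) (Fin M.d) ℝ :=
  Matrix.of fun i k => ∑' j : ℕ, Ψ j s i k

/-- `Σ_y(u) = P_{β⊥} ∫_0^u Ψ_s(1) Ω(s) Ψ_s(1)ᵀ ds P_{β⊥}`. -/
def Sigy (Ψ : ℕ → ℝ → Matrix (Fin M.d) (Fin M.d) ℝ) (v : ℝ) :
    Matrix (Fin M.d) (Fin M.d) ℝ :=
  M.Pbetaperp *
    (Matrix.of fun i k => ∫ s in (0:ℝ)..v, (M.Ψ1 Ψ s * M.Ωm s * (M.Ψ1 Ψ s)ᵀ) i k) *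
    M.Pbetaperp

/-- The time-varying VMA(∞) process `z̃_t(τ) = ∑_j Ψ_j(τ) ω(τ) ε_{t-j}`. -/
def ztil (Ψ : ℕ → ℝ → Matrix (Fin M.d) (Fin M.d) ℝ) (s : ℝ) (t : ℤ) (w : M.Ω) :
    Fin M.d → ℝ :=
  fun i => ∑' j : ℕ, ((Ψ j s * M.ω s).mulVec (M.ε (t - (j : ℤ)) w)) i

abbrev wIdx : Type := Fin M.r0 ⊕ (Fin (M.p0 - 1) × Fin M.d)

/-- Frozen-coefficient stationary regressor `w̃_t(τ) = [ỹ_t(τ)ᵀβ, Δx̃_t(τ)ᵀ]ᵀ`. -/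
def wtil (Ψ : ℕ → ℝ → Matrix (Fin M.d) (Fin M.d) ℝ) (s : ℝ) (t : ℤ) (w : M.Ω) :
    M.wIdx → ℝ :=
  fun a => match a with
  | Sum.inl q => ((M.β)ᵀ.mulVec (M.ztil Ψ s t w)) q
  | Sum.inr (j, i) =>
      M.ztil Ψ s (t - (j : ℤ)) w i - (M.Pbeta.mulVec (M.ztil Ψ s (t - (j : ℤ) - 1) w)) i

/-- `Σ_w(τ) = E(w̃_t(τ) w̃_t(τ)ᵀ)`. -/
def Sigw (Ψ : ℕ → ℝ → Matrix (Fin M.d) (Fin M.d) ℝ) (s : ℝ) : Matrix M.wIdx M.wIdx ℝ :=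
  Matrix.of fun a b => ∫ w, M.wtil Ψ s 0 w a * M.wtil Ψ s 0 w b ∂M.P

end TVData

/-! ### Assumption 1 -/

structure Assumption1 (M : TVData) : Prop where
  probMeas : IsProbabilityMeasure M.P
  εmeas : ∀ t, Measurable (M.ε t)
  ymeas : ∀ T t, Measurable (M.y T t)
  model : M.VECMeq
  roots : ∀ s ∈ Icc (0:ℝ) 1, ∀ z : ℂ,
    (M.Cpoly s).det.eval z = 0 → 1 < ‖z‖ ∨ z = 1
  unitRoots : ∀ s ∈ Icc (0:ℝ) 1,
    Polynomial.rootMultiplicity 1 (M.Cpoly s).det = M.d - M.r0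
  rankα : ∀ s ∈ Icc (0:ℝ) 1, (M.α s).rank = M.r0
  rankβ : M.β.rank = M.r0
  perpα : ∀ s ∈ Icc (0:ℝ) 1, (M.α s)ᵀ * M.αperp s = 0 ∧ (M.αperp s).rank = M.d - M.r0
  perpβ : (M.β)ᵀ * M.βperp = 0 ∧ M.βperp.rank = M.d - M.r0
  nonsing : ∀ s ∈ Icc (0:ℝ) 1, ((M.αperp s)ᵀ * M.ΓL1 s * M.βperp).det ≠ 0
  smoothα : ∀ i j, ContDiffOn ℝ 3 (fun s => M.α s i j) (Icc 0 1)
  smoothΓ : ∀ k i j, ContDiffOn ℝ 3 (fun s => M.Γ k s i j) (Icc 0 1)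
  smoothω : ∀ i j, ContDiffOn ℝ 3 (fun s => M.ω s i j) (Icc 0 1)
  freezeα : ∀ s < (0:ℝ), M.α s = M.α 0
  freezeΓ : ∀ s < (0:ℝ), ∀ k, M.Γ k s = M.Γ k 0
  freezeω : ∀ s < (0:ℝ), M.ω s = M.ω 0
  y0bdd : ∀ e : ℝ, 0 < e → ∃ Mb : ℝ, ∀ T : ℕ, 1 ≤ T →
    M.P {w | Mb < ‖M.y T 0 w‖} ≤ ENNReal.ofReal e
  mds : M.MDS
  moments : ∃ C : ℝ, ∀ t : ℤ, (∫ w, ‖M.ε t w‖ ^ M.δ ∂M.P) ≤ C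
  Ωpos : ∀ s ∈ Icc (0:ℝ) 1, (M.Ωm s).PosDef

/-! ### Assumption 2 -/

structure KernelBW (K : ℝ → ℝ) (h : ℕ → ℝ) : Prop where
  symm : ∀ v : ℝ, K (-v) = K v
  pos : ∀ v ∈ Icc (-1:ℝ) 1, 0 < K v
  nonneg : ∀ v : ℝ, 0 ≤ K v
  supp : ∀ v : ℝ, 1 < |v| → K v = 0
  int_one : ∫ v in (-1:ℝ)..1, K v = 1
  lip : ∃ L : ℝ≥0, LipschitzOnWith L K (Icc (-1:ℝ) 1)
  hpos : ∀ T, 0 < h T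
  h0 : Tendsto h atTop (𝓝 0)
  Th : Tendsto (fun T : ℕ => (T : ℝ) * h T) atTop atTop

structure Assumption2 (M : TVData) (K : ℝ → ℝ) (h : ℕ → ℝ) : Prop where
  kern : KernelBW K h
  indep : iIndepFun M.ε M.P
  rate : Tendsto (fun T : ℕ =>
    (T : ℝ) ^ (1 - 4 / M.δ) * h T / (Real.log T) ^ (1 - 4 / M.δ)) atTop atTop

/-! ### Local linear estimation machinery -/

def kwt (K : ℝ → ℝ) (h : ℕ → ℝ) (T : ℕ) (t : ℤ) (s : ℝ) (l : ℕ) : ℝ :=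
  (((t : ℝ) / (T : ℝ) - s) / h T) ^ l * K (((t : ℝ) / (T : ℝ) - s) / h T)

section LL

variable {W : Type*} {idx : Type*} [Fintype idx] [DecidableEq idx] {d : ℕ}

def llS (K : ℝ → ℝ) (h : ℕ → ℝ) (g : ℤ → W → idx → ℝ) (l T : ℕ) (s : ℝ) (w : W) :
    Matrix idx idx ℝ :=
  ∑ t ∈ Finset.Icc (1:ℤ) (T:ℤ), kwt K h T t s l • Matrix.of fun a b => g t w a * g t w b

def llV (K : ℝ → ℝ) (h : ℕ → ℝ) (Yr : ℤ → W → Fin d → ℝ) (g : ℤ → W → idx → ℝ)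
    (l T : ℕ) (s : ℝ) (w : W) : Matrix (Fin d) idx ℝ :=
  ∑ t ∈ Finset.Icc (1:ℤ) (T:ℤ), kwt K h T t s l • Matrix.of fun i a => Yr t w i * g t w a

/-- Local linear estimator `[V₀, V₁] ⬝ (S-block)⁺ ⬝ [I; 0]`. -/
def llEst (K : ℝ → ℝ) (h : ℕ → ℝ) (Yr : ℤ → W → Fin d → ℝ) (g : ℤ → W → idx → ℝ)
    (T : ℕ) (s : ℝ) (w : W) : Matrix (Fin d) idx ℝ :=
  Matrix.fromCols (llV K h Yr g 0 T s w) (llV K h Yr g 1 T s w) *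
    mpinv (Matrix.fromBlocks (llS K h g 0 T s w) (llS K h g 1 T s w)
      (llS K h g 1 T s w) (llS K h g 2 T s w)) *
    Matrix.fromRows (1 : Matrix idx idx ℝ) (0 : Matrix idx idx ℝ)

def llResid (K : ℝ → ℝ) (h : ℕ → ℝ) (Yr : ℤ → W → Fin d → ℝ) (g : ℤ → W → idx → ℝ)
    (T : ℕ) (t : ℤ) (w : W) : Fin d → ℝ :=
  fun i => Yr t w i - ((llEst K h Yr g T ((t : ℝ) / (T : ℝ)) w).mulVec (g t w)) i

def Pstat (K : ℝ → ℝ) (h : ℕ → ℝ) (T : ℕ) (l : ℕ) (s : ℝ) : ℝ :=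
  (1 / ((T : ℝ) * h T)) * ∑ t ∈ Finset.Icc (1:ℤ) (T:ℤ), kwt K h T t s l

/-- Local linear weights `w_t(τ)`. -/
def llw (K : ℝ → ℝ) (h : ℕ → ℝ) (T : ℕ) (t : ℤ) (s : ℝ) : ℝ :=
  (1 / h T) * K (((t : ℝ) / (T : ℝ) - s) / h T) *
    (Pstat K h T 2 s - (((t : ℝ) / (T : ℝ) - s) / h T) * Pstat K h T 1 s) /
    (Pstat K h T 0 s * Pstat K h T 2 s - (Pstat K h T 1 s) ^ 2)

/-- Local linear residual covariance estimator. -/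
def llOm (K : ℝ → ℝ) (h : ℕ → ℝ) (Yr : ℤ → W → Fin d → ℝ) (g : ℤ → W → idx → ℝ)
    (T : ℕ) (s : ℝ) (w : W) : Matrix (Fin d) (Fin d) ℝ :=
  (1 / (T : ℝ)) •
    ∑ t ∈ Finset.Icc (1:ℤ) (T:ℤ),
      llw K h T t s •
        Matrix.of fun i j => llResid K h Yr g T t w i * llResid K h Yr g T t w j

end LL

namespace TVData

variable (M : TVData)

/-- The VECM regressor `h_{t-1} = [y_{t-1}ᵀ, Δx_{t-1}ᵀ]ᵀ`, with `p-1` lagged differences. -/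
def hreg (p T : ℕ) (t : ℤ) (w : M.Ω) : (Fin M.d ⊕ (Fin (p - 1) × Fin M.d)) → ℝ :=
  fun a => match a with
  | Sum.inl i => M.y T (t - 1) w i
  | Sum.inr (j, i) => M.Δy T (t - 1 - (j : ℤ)) w i

/-- Local linear estimator `[Π̂(τ), Γ̂(τ)]` with `p-1` lagged differences. -/
def Est (K : ℝ → ℝ) (h : ℕ → ℝ) (p T : ℕ) (s : ℝ) (w : M.Ω) :
    Matrix (Fin M.d) (Fin M.d ⊕ (Fin (p - 1) × Fin M.d)) ℝ :=
  llEst K h (M.Δy T) (M.hreg p T) T s w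

/-- True coefficient matrix `[Π(τ), Γ(τ)]`. -/
def Coef (s : ℝ) : Matrix (Fin M.d) (Fin M.d ⊕ (Fin (M.p0 - 1) × Fin M.d)) ℝ :=
  Matrix.of fun i a => match a with
  | Sum.inl k => M.Pi' s i k
  | Sum.inr (j, k) => M.Γ j s i k

/-- Local linear residuals with `p-1` lagged differences. -/
def uhat (K : ℝ → ℝ) (h : ℕ → ℝ) (p T : ℕ) (t : ℤ) (w : M.Ω) : Fin M.d → ℝ :=
  llResid K h (M.Δy T) (M.hreg p T) T t w

/-- Residual covariance estimator `Ω̂(τ)`. -/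
def Ωhat (K : ℝ → ℝ) (h : ℕ → ℝ) (T : ℕ) (s : ℝ) (w : M.Ω) :
    Matrix (Fin M.d) (Fin M.d) ℝ :=
  llOm K h (M.Δy T) (M.hreg M.p0 T) T s w

/-- `Π̂(τ)`. -/
def PiHat (K : ℝ → ℝ) (h : ℕ → ℝ) (T : ℕ) (s : ℝ) (w : M.Ω) :
    Matrix (Fin M.d) (Fin M.d) ℝ :=
  Matrix.of fun i k => M.Est K h M.p0 T s w i (Sum.inl k)

/-- `α̂(τ)`: the first `r0` columns of `Π̂(τ)`. -/
def αhat (K : ℝ → ℝ) (h : ℕ → ℝ) (T : ℕ) (s : ℝ) (w : M.Ω) :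
    Matrix (Fin M.d) (Fin M.r0) ℝ :=
  Matrix.of fun i q => M.Est K h M.p0 T s w i (Sum.inl (Fin.castLE M.hr0d q))

/-- True `[α(τ), Γ(τ)]`. -/
def abTrue (s : ℝ) : Matrix (Fin M.d) M.wIdx ℝ :=
  Matrix.of fun i a => match a with
  | Sum.inl q => M.α s i q
  | Sum.inr (j, k) => M.Γ j s i k

/-- Estimated `[α̂(τ), Γ̂(τ)]`. -/
def abHat (K : ℝ → ℝ) (h : ℕ → ℝ) (T : ℕ) (s : ℝ) (w : M.Ω) :
    Matrix (Fin M.d) M.wIdx ℝ :=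
  Matrix.of fun i a => match a with
  | Sum.inl q => M.αhat K h T s w i q
  | Sum.inr x => M.Est K h M.p0 T s w i (Sum.inr x)

/-- `b(τ) = vec(α(τ), Γ(τ))`. -/
def bvec (s : ℝ) : (M.wIdx × Fin M.d) → ℝ := fun p => M.abTrue s p.2 p.1

/-- `b̂(τ) = vec(α̂(τ), Γ̂(τ))`. -/
def bhat (K : ℝ → ℝ) (h : ℕ → ℝ) (T : ℕ) (s : ℝ) (w : M.Ω) : (M.wIdx × Fin M.d) → ℝ :=
  fun p => M.abHat K h T s w p.2 p.1

/-- The in-sample regressor `w_t = [z_tᵀ β, Δx_tᵀ]ᵀ` (note `βᵀz_t = βᵀ y_t`). -/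
def wv (T : ℕ) (t : ℤ) (w : M.Ω) : M.wIdx → ℝ :=
  fun a => match a with
  | Sum.inl q => ((M.β)ᵀ.mulVec (M.y T t w)) q
  | Sum.inr (j, i) => M.Δy T (t - (j : ℤ)) w i

/-- Kernel estimator `Σ̂_w(τ)`. -/
def Sigwhat (K : ℝ → ℝ) (h : ℕ → ℝ) (T : ℕ) (s : ℝ) (w : M.Ω) : Matrix M.wIdx M.wIdx ℝ :=
  (((T : ℝ) * h T)⁻¹) • llS K h (fun t w' => M.wv T (t - 1) w') 0 T s w

/-- The index of the last `d - r0` coordinates. -/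
def lastIdx (m : Fin (M.d - M.r0)) : Fin M.d :=
  ⟨M.r0 + (m : ℕ), by have h1 := m.2; have h2 := M.hr0d; omega⟩

end TVData

/-! ### Statement 1 : the transformed process `z_t` and the exact representation of `y_t` -/

/-- `z_t = P_β y_t + P_{β⊥} Δy_t`. -/
def zproc (M : TVData) (T : ℕ) (t : ℤ) (w : M.Ω) : Fin M.d → ℝ :=
  fun i => (M.Pbeta.mulVec (M.y T t w)) i + (M.Pbetaperp.mulVec (M.Δy T t w)) i

/-! ### Auxiliary lemmas for Statement 1 -/

lemma isUnit_det_of_rank_eq_card' {n : Type*} [Fintype n] [DecidableEq n]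
    (A : Matrix n n ℝ) (h : A.rank = Fintype.card n) : IsUnit A.det := by
  rw [← Matrix.isUnit_iff_isUnit_det, ← Matrix.mulVec_surjective_iff_isUnit]
  have htop : LinearMap.range A.mulVecLin = ⊤ := by
    apply Submodule.eq_top_of_finrank_eq
    rw [← Matrix.rank, h, Module.finrank_pi]
  intro v
  obtain ⟨x, hx⟩ := LinearMap.range_eq_top.mp htop v
  exact ⟨x, by simpa using hx⟩

lemma toC_add' {m n : Type*} (A B : Matrix m n ℝ) : toC (A + B) = toC A + toC B := by
  ext i j; simp [toC]
lemma toC_sub' {m n : Type*} (A B : Matrix m n ℝ) : toC (A - B) = toC A - toC B := by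
  ext i j; simp [toC]
lemma toC_zero' {m n : Type*} : toC (0 : Matrix m n ℝ) = 0 := by
  ext i j; simp [toC]
lemma toC_one' {n : Type*} [Fintype n] [DecidableEq n] : toC (1 : Matrix n n ℝ) = 1 := by
  ext i j; by_cases h : i = j <;> simp [toC, Matrix.one_apply, h]
lemma toC_mul' {m n p : Type*} [Fintype n] (A : Matrix m n ℝ) (B : Matrix n p ℝ) :
    toC (A * B) = toC A * toC B := by
  ext i j; simp only [toC, Matrix.map_apply, Matrix.mul_apply]; push_cast; ring
lemma toC_fromRows' {m₁ m₂ n : Type*} (A : Matrix m₁ n ℝ) (B : Matrix m₂ n ℝ) :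
    toC (Matrix.fromRows A B) = Matrix.fromRows (toC A) (toC B) := by
  ext (i|i) j <;> rfl
lemma toC_ite' {m n : Type*} (c : Prop) [Decidable c] (A B : Matrix m n ℝ) :
    toC (if c then A else B) = if c then toC A else toC B := by
  split_ifs <;> rfl

lemma proj_sum_eq_one' (d r : ℕ) (hr : r ≤ d)
    (β : Matrix (Fin d) (Fin r) ℝ) (βp : Matrix (Fin d) (Fin (d-r)) ℝ)
    (hUβ : IsUnit ((β)ᵀ * β).det) (hUp : IsUnit ((βp)ᵀ * βp).det)
    (hβtβp : (β)ᵀ * βp = 0) :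
    β * ((β)ᵀ*β)⁻¹ * (β)ᵀ + βp * ((βp)ᵀ*βp)⁻¹ * (βp)ᵀ = 1 := by
  have hβptβ : (βp)ᵀ * β = 0 := by
    have := congrArg Matrix.transpose hβtβp
    simpa [Matrix.transpose_mul] using this
  set Pb := β * ((β)ᵀ*β)⁻¹ * (β)ᵀ with hPb
  set Pp := βp * ((βp)ᵀ*βp)⁻¹ * (βp)ᵀ with hPp
  have hPbβ : Pb * β = β := by
    rw [hPb, Matrix.mul_assoc, Matrix.mul_assoc, Matrix.nonsing_inv_mul _ hUβ, Matrix.mul_one]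
  have hPpβp : Pp * βp = βp := by
    rw [hPp, Matrix.mul_assoc, Matrix.mul_assoc, Matrix.nonsing_inv_mul _ hUp, Matrix.mul_one]
  have hPbβp : Pb * βp = 0 := by
    rw [hPb, Matrix.mul_assoc, Matrix.mul_assoc, hβtβp, Matrix.mul_zero, Matrix.mul_zero]
  have hPpβ : Pp * β = 0 := by
    rw [hPp, Matrix.mul_assoc, Matrix.mul_assoc, hβptβ, Matrix.mul_zero, Matrix.mul_zero]
  set S := Pb + Pp with hS
  set Q : Matrix (Fin d) (Fin r ⊕ Fin (d - r)) ℝ := Matrix.fromCols β βp with hQ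
  have hcard : r + (d - r) = d := Nat.add_sub_cancel' hr
  let e : Fin d ≃ (Fin r ⊕ Fin (d - r)) := (finCongr hcard.symm).trans finSumFinEquiv.symm
  set R : Matrix (Fin d) (Fin d) ℝ := Q.submatrix id e with hR
  have hSQ : S * Q = Q := by
    rw [hQ, Matrix.mul_fromCols, hS, Matrix.add_mul, Matrix.add_mul,
      hPbβ, hPpβ, hPbβp, hPpβp, add_zero, zero_add]
  have hQtQ : Qᵀ * Q = Matrix.fromBlocks ((β)ᵀ*β) 0 0 ((βp)ᵀ*βp) := by
    rw [hQ, Matrix.transpose_fromCols, Matrix.fromRows_mul_fromCols, hβtβp, hβptβ]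
  have hRtR : Rᵀ * R = (Qᵀ * Q).submatrix e e := by
    rw [hR, Matrix.transpose_submatrix]
    simpa using Matrix.submatrix_mul_equiv Qᵀ Q ⇑e (Equiv.refl (Fin d)) ⇑e
  have hdetR : IsUnit R.det := by
    have h1 : (Rᵀ * R).det = ((β)ᵀ*β).det * ((βp)ᵀ*βp).det := by
      rw [hRtR, hQtQ, Matrix.det_submatrix_equiv_self, Matrix.det_fromBlocks_zero₂₁]
    rw [Matrix.det_mul, Matrix.det_transpose] at h1
    exact isUnit_of_mul_isUnit_left (h1 ▸ hUβ.mul hUp)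
  have hSR : S * R = R := by
    have h1 : S.submatrix id (⇑(Equiv.refl (Fin d))) * Q.submatrix (⇑(Equiv.refl (Fin d))) ⇑e
        = (S*Q).submatrix id ⇑e := Matrix.submatrix_mul_equiv S Q id (Equiv.refl (Fin d)) ⇑e
    simpa [hSQ, hR] using h1
  calc S = S * (R * R⁻¹) := by rw [Matrix.mul_nonsing_inv _ hdetR, Matrix.mul_one]
    _ = (S * R) * R⁻¹ := by rw [Matrix.mul_assoc]
    _ = R * R⁻¹ := by rw [hSR]
    _ = 1 := Matrix.mul_nonsing_inv _ hdetR

/-- The VAR coefficient matrices of the transformed process. -/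
def Bcoef (M : TVData) (q : ℕ) (i : ℕ) (s : ℝ) : Matrix (Fin M.d) (Fin M.d) ℝ :=
  (if i < q then M.Γ i s else 0) + (if i = 0 then M.Pbeta + M.α s * (M.β)ᵀ else 0) -
  (if i = 0 then 0 else (if i - 1 < q then M.Γ (i-1) s else 0) * M.Pbeta)


theorem statement1 (M : TVData) (hA1 : Assumption1 M) :
    ∃ (p : ℕ) (B : ℕ → ℝ → Matrix (Fin M.d) (Fin M.d) ℝ),
      -- B_i are the autoregressive coefficients of B_τ(L) = I - ∑_{i=1}^p B_i(τ)L^i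
      (∀ s ∈ Icc (0:ℝ) 1, ∀ z : ℂ,
        M.Bz s z = 1 - ∑ i ∈ Finset.range p, z ^ (i + 1) • toC (B i s)) ∧
      -- z_t satisfies the time-varying VAR(p) recursion z_t = ∑ B_i(τ_t) z_{t-i} + u_t
      (∀ T : ℕ, 1 ≤ T → ∀ t : ℤ, 1 ≤ t → t ≤ (T : ℤ) → ∀ w : M.Ω,
        zproc M T t w =
          (∑ i ∈ Finset.range p, (B i (τt T t)).mulVec (zproc M T (t - 1 - (i : ℤ)) w)) +
            M.u T t w) ∧
      -- exact representation y_t = P_{β⊥} ∑_{j=1}^t z_j + P_β z_t + P_{β⊥} y_0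
      (∀ T : ℕ, 1 ≤ T → ∀ t : ℤ, 1 ≤ t → t ≤ (T : ℤ) → ∀ w : M.Ω,
        M.y T t w =
          M.Pbetaperp.mulVec (∑ j ∈ Finset.Icc (1:ℤ) t, zproc M T j w) +
          M.Pbeta.mulVec (zproc M T t w) +
          M.Pbetaperp.mulVec (M.y T 0 w)) := by
  classical
  obtain ⟨hβperp0, hβperprank⟩ := hA1.perpβ
  have hUβ : IsUnit ((M.β)ᵀ * M.β).det := by
    apply isUnit_det_of_rank_eq_card'
    rw [Matrix.rank_transpose_mul_self, hA1.rankβ, Fintype.card_fin]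
  have hUp : IsUnit ((M.βperp)ᵀ * M.βperp).det := by
    apply isUnit_det_of_rank_eq_card'
    rw [Matrix.rank_transpose_mul_self, hβperprank, Fintype.card_fin]
  have hβptβ : (M.βperp)ᵀ * M.β = 0 := by
    have := congrArg Matrix.transpose hβperp0
    simpa [Matrix.transpose_mul] using this
  have hPsum : M.Pbeta + M.Pbetaperp = 1 := by
    rw [TVData.Pbeta, TVData.Pbetaperp]
    exact proj_sum_eq_one' M.d M.r0 M.hr0d M.β M.βperp hUβ hUp hβperp0
  -- projection identities
  have hPbβ : M.Pbeta * M.β = M.β := by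
    rw [TVData.Pbeta, Matrix.mul_assoc, Matrix.mul_assoc, Matrix.nonsing_inv_mul _ hUβ,
      Matrix.mul_one]
  have hPpβp : M.Pbetaperp * M.βperp = M.βperp := by
    rw [TVData.Pbetaperp, Matrix.mul_assoc, Matrix.mul_assoc, Matrix.nonsing_inv_mul _ hUp,
      Matrix.mul_one]
  have hPbβp : M.Pbeta * M.βperp = 0 := by
    rw [TVData.Pbeta, Matrix.mul_assoc, Matrix.mul_assoc, hβperp0, Matrix.mul_zero,
      Matrix.mul_zero]
  have hPpβ : M.Pbetaperp * M.β = 0 := by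
    rw [TVData.Pbetaperp, Matrix.mul_assoc, Matrix.mul_assoc, hβptβ, Matrix.mul_zero,
      Matrix.mul_zero]
  have hβtPb : (M.β)ᵀ * M.Pbeta = (M.β)ᵀ := by
    rw [TVData.Pbeta, ← Matrix.mul_assoc, ← Matrix.mul_assoc, Matrix.mul_nonsing_inv _ hUβ,
      Matrix.one_mul]
  have hβtPp : (M.β)ᵀ * M.Pbetaperp = 0 := by
    rw [TVData.Pbetaperp, ← Matrix.mul_assoc, ← Matrix.mul_assoc, hβperp0, Matrix.zero_mul,
      Matrix.zero_mul]
  have hPbPb : M.Pbeta * M.Pbeta = M.Pbeta := by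
    nth_rewrite 2 [TVData.Pbeta]
    rw [← Matrix.mul_assoc, ← Matrix.mul_assoc, hPbβ]
    rfl
  have hPbPp : M.Pbeta * M.Pbetaperp = 0 := by
    rw [TVData.Pbetaperp, ← Matrix.mul_assoc, ← Matrix.mul_assoc, hPbβp, Matrix.zero_mul,
      Matrix.zero_mul]
  have hPpPb : M.Pbetaperp * M.Pbeta = 0 := by
    rw [TVData.Pbeta, ← Matrix.mul_assoc, ← Matrix.mul_assoc, hPpβ, Matrix.zero_mul,
      Matrix.zero_mul]
  have hPpPp : M.Pbetaperp * M.Pbetaperp = M.Pbetaperp := by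
    nth_rewrite 2 [TVData.Pbetaperp]
    rw [← Matrix.mul_assoc, ← Matrix.mul_assoc, hPpβp]
    rfl
  -- vector-level identities
  have hzdef : ∀ T : ℕ, ∀ t : ℤ, ∀ w : M.Ω, zproc M T t w
      = M.Pbeta *ᵥ (M.y T t w) + M.Pbetaperp *ᵥ (M.Δy T t w) := by
    intro T t w; funext i; rfl
  have hΔdef : ∀ T : ℕ, ∀ t : ℤ, ∀ w : M.Ω,
      M.Δy T t w = M.y T t w - M.y T (t-1) w := by
    intro T t w; funext i; rfl
  have hPbz : ∀ T : ℕ, ∀ t : ℤ, ∀ w : M.Ω,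
      M.Pbeta *ᵥ zproc M T t w = M.Pbeta *ᵥ M.y T t w := by
    intro T t w
    rw [hzdef, Matrix.mulVec_add, Matrix.mulVec_mulVec, Matrix.mulVec_mulVec, hPbPb, hPbPp,
      Matrix.zero_mulVec, add_zero]
  have hPpz : ∀ T : ℕ, ∀ t : ℤ, ∀ w : M.Ω,
      M.Pbetaperp *ᵥ zproc M T t w = M.Pbetaperp *ᵥ M.Δy T t w := by
    intro T t w
    rw [hzdef, Matrix.mulVec_add, Matrix.mulVec_mulVec, Matrix.mulVec_mulVec, hPpPb, hPpPp,
      Matrix.zero_mulVec, zero_add]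
  have hβz : ∀ T : ℕ, ∀ t : ℤ, ∀ w : M.Ω,
      (M.β)ᵀ *ᵥ zproc M T t w = (M.β)ᵀ *ᵥ M.y T t w := by
    intro T t w
    rw [hzdef, Matrix.mulVec_add, Matrix.mulVec_mulVec, Matrix.mulVec_mulVec, hβtPb, hβtPp,
      Matrix.zero_mulVec, add_zero]
  have hsplit : ∀ v : Fin M.d → ℝ, M.Pbetaperp *ᵥ v + M.Pbeta *ᵥ v = v := by
    intro v
    rw [← Matrix.add_mulVec, add_comm M.Pbetaperp M.Pbeta, hPsum, Matrix.one_mulVec]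
  have hzalt : ∀ T : ℕ, ∀ t : ℤ, ∀ w : M.Ω,
      zproc M T t w = M.Pbeta *ᵥ M.y T (t-1) w + M.Δy T t w := by
    intro T t w
    have hy : M.y T t w = M.y T (t-1) w + M.Δy T t w := by
      rw [hΔdef T t w]; abel
    rw [hzdef, hy, Matrix.mulVec_add, add_assoc, ← Matrix.add_mulVec, hPsum,
      Matrix.one_mulVec]
  have hΔz : ∀ T : ℕ, ∀ t : ℤ, ∀ w : M.Ω,
      M.Δy T t w = zproc M T t w - M.Pbeta *ᵥ zproc M T (t-1) w := by
    intro T t w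
    rw [hPbz T (t-1) w, hzalt T t w, add_sub_cancel_left]
  obtain ⟨q, hq⟩ : ∃ q, M.p0 = q + 1 := ⟨M.p0 - 1, by have := M.hp0; omega⟩
  have hq1 : M.p0 - 1 = q := by omega
  refine ⟨M.p0, Bcoef M q, ?_, ?_, ?_⟩
  · -- the polynomial identity
    intro s hs z
    have hbb : M.βbar * (M.β)ᵀ = M.Pbeta := rfl
    have hpp : M.βperp * (M.βperpbar)ᵀ = M.Pbetaperp := by
      rw [TVData.βperpbar, Matrix.transpose_mul, Matrix.transpose_nonsing_inv,
        Matrix.transpose_mul, Matrix.transpose_transpose, ← Matrix.mul_assoc]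
      rfl
    have hJ : toC M.Jmat = Matrix.fromRows (toC ((M.β)ᵀ)) (toC ((M.βperpbar)ᵀ)) := by
      rw [TVData.Jmat, Matrix.transpose_fromCols, toC_fromRows']
    have hPpC : toC M.Pbetaperp = 1 - toC M.Pbeta := by
      have h := congrArg toC hPsum
      rw [toC_add', toC_one'] at h
      exact eq_sub_of_add_eq' h
    have hS3 : z • ((∑ j ∈ Finset.range q, z ^ (j+1) • toC (M.Γ j s)) * toC M.Pbeta)
        = ∑ j ∈ Finset.range q, z ^ (j+2) • (toC (M.Γ j s) * toC M.Pbeta) := by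
      rw [Finset.sum_mul, Finset.smul_sum]
      refine Finset.sum_congr rfl fun j _ => ?_
      rw [Matrix.smul_mul, smul_smul]
      congr 1
      ring
    have hsum : ∑ i ∈ Finset.range M.p0, z ^ (i + 1) • toC (Bcoef M q i s)
        = (∑ j ∈ Finset.range q, z ^ (j+1) • toC (M.Γ j s))
          + z • (toC M.Pbeta + toC (M.α s * (M.β)ᵀ))
          - ∑ j ∈ Finset.range q, z ^ (j+2) • (toC (M.Γ j s) * toC M.Pbeta) := by
      have h1 : ∀ i, z ^ (i + 1) • toC (Bcoef M q i s)
          = z ^ (i+1) • (if i < q then toC (M.Γ i s) else 0)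
            + z ^ (i+1) • (if i = 0 then toC M.Pbeta + toC (M.α s * (M.β)ᵀ) else 0)
            - z ^ (i+1) • (if i = 0 then 0 else
                (if i - 1 < q then toC (M.Γ (i-1) s) else 0) * toC M.Pbeta) := by
        intro i
        simp only [Bcoef, toC_sub', toC_add', toC_ite', toC_zero', toC_mul', smul_sub, smul_add]
      rw [Finset.sum_congr rfl fun i _ => h1 i, Finset.sum_sub_distrib, Finset.sum_add_distrib]
      congr 1
      · congr 1
        · rw [hq, Finset.sum_range_succ, if_neg (lt_irrefl q), smul_zero, add_zero]
          exact Finset.sum_congr rfl fun i hi => by rw [if_pos (Finset.mem_range.mp hi)]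
        · rw [Finset.sum_eq_single_of_mem 0 (Finset.mem_range.mpr (by omega))
            (fun b _ hb => by rw [if_neg hb, smul_zero])]
          rw [if_pos rfl, pow_one]
      · rw [hq, Finset.sum_range_succ', if_pos rfl, smul_zero, add_zero]
        refine Finset.sum_congr rfl fun i hi => ?_
        rw [if_neg (by omega : ¬(i + 1 = 0)), Nat.add_sub_cancel,
          if_pos (Finset.mem_range.mp hi)]
    rw [TVData.Bz, hJ, Matrix.fromCols_mul_fromRows, Matrix.sub_mul, Matrix.smul_mul,
      Matrix.smul_mul, Matrix.mul_assoc, ← toC_mul', hbb, ← toC_mul', Matrix.mul_assoc,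
      ← toC_mul', hpp, hPpC, Matrix.mul_sub, Matrix.mul_one, sub_smul, one_smul,
      TVData.Γz, hq1, Matrix.sub_mul, Matrix.one_mul, smul_sub, hS3, hsum, smul_add]
    abel
  · -- the VAR(p) recursion
    intro T hT t ht1 htT w
    have hmod := hA1.model T hT t htT w
    have hdz : ∀ j : ℕ, M.Δy T (t - 1 - (j:ℤ)) w
        = zproc M T (t - 1 - (j:ℤ)) w - M.Pbeta *ᵥ zproc M T (t - 2 - (j:ℤ)) w := by
      intro j
      have h2 : t - 1 - (j:ℤ) - 1 = t - 2 - (j:ℤ) := by ring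
      rw [hΔz T (t - 1 - (j:ℤ)) w, h2]
    have hPiz : (M.Pi' (τt T t)) *ᵥ (M.y T (t-1) w)
        = M.α (τt T t) *ᵥ ((M.β)ᵀ *ᵥ zproc M T (t-1) w) := by
      rw [TVData.Pi', ← Matrix.mulVec_mulVec, hβz]
    have hsumΓ : (∑ j ∈ Finset.range (M.p0 - 1),
          (M.Γ j (τt T t)) *ᵥ (M.Δy T (t - 1 - (j:ℤ)) w))
        = (∑ j ∈ Finset.range q, (M.Γ j (τt T t)) *ᵥ zproc M T (t - 1 - (j:ℤ)) w)
          - ∑ j ∈ Finset.range q,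
              (M.Γ j (τt T t) * M.Pbeta) *ᵥ zproc M T (t - 2 - (j:ℤ)) w := by
      rw [hq1, ← Finset.sum_sub_distrib]
      refine Finset.sum_congr rfl fun j _ => ?_
      rw [hdz j, Matrix.mulVec_sub, Matrix.mulVec_mulVec]
    have hRsum : (∑ i ∈ Finset.range M.p0,
          (Bcoef M q i (τt T t)) *ᵥ zproc M T (t - 1 - (i:ℤ)) w)
        = ((∑ j ∈ Finset.range q, (M.Γ j (τt T t)) *ᵥ zproc M T (t - 1 - (j:ℤ)) w)
          + (M.Pbeta + M.α (τt T t) * (M.β)ᵀ) *ᵥ zproc M T (t-1) w)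
          - ∑ j ∈ Finset.range q,
              (M.Γ j (τt T t) * M.Pbeta) *ᵥ zproc M T (t - 2 - (j:ℤ)) w := by
      have h1 : ∀ i : ℕ, (Bcoef M q i (τt T t)) *ᵥ zproc M T (t - 1 - (i:ℤ)) w
          = (if i < q then M.Γ i (τt T t) else 0) *ᵥ zproc M T (t - 1 - (i:ℤ)) w
            + (if i = 0 then M.Pbeta + M.α (τt T t) * (M.β)ᵀ else 0) *ᵥ
                zproc M T (t - 1 - (i:ℤ)) w
            - (if i = 0 then 0 else (if i - 1 < q then M.Γ (i-1) (τt T t) else 0) * M.Pbeta) *ᵥ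
                zproc M T (t - 1 - (i:ℤ)) w := by
        intro i
        rw [Bcoef, Matrix.sub_mulVec, Matrix.add_mulVec]
      rw [Finset.sum_congr rfl fun i _ => h1 i, Finset.sum_sub_distrib, Finset.sum_add_distrib]
      congr 1
      · congr 1
        · rw [hq, Finset.sum_range_succ, if_neg (lt_irrefl q), Matrix.zero_mulVec, add_zero]
          exact Finset.sum_congr rfl fun i hi => by rw [if_pos (Finset.mem_range.mp hi)]
        · rw [Finset.sum_eq_single_of_mem 0 (Finset.mem_range.mpr (by omega))
            (fun b _ hb => by rw [if_neg hb, Matrix.zero_mulVec])]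
          rw [if_pos rfl]
          norm_num
      · rw [hq, Finset.sum_range_succ', if_pos rfl, Matrix.zero_mulVec, add_zero]
        refine Finset.sum_congr rfl fun i hi => ?_
        rw [if_neg (by omega : ¬(i + 1 = 0)), Nat.add_sub_cancel,
          if_pos (Finset.mem_range.mp hi)]
        have h3 : t - 1 - ((i:ℤ) + 1) = t - 2 - (i:ℤ) := by ring
        push_cast
        rw [h3]
    rw [hRsum, hzalt T t w, hmod, hPiz, hsumΓ, ← hPbz T (t-1) w, Matrix.add_mulVec,
      ← Matrix.mulVec_mulVec]
    abel
  · -- the exact representation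
    intro T hT t ht1 htT w
    clear htT
    revert ht1
    refine Int.le_induction (motive := fun t _ => M.y T t w =
      M.Pbetaperp *ᵥ ∑ j ∈ Finset.Icc 1 t, zproc M T j w + M.Pbeta *ᵥ zproc M T t w +
      M.Pbetaperp *ᵥ M.y T 0 w) ?_ ?_ t
    · beta_reduce
      rw [Finset.Icc_self, Finset.sum_singleton]
      have hΔ1 : M.Δy T 1 w = M.y T 1 w - M.y T 0 w := by
        rw [hΔdef T 1 w]
        norm_num
      rw [hPpz, hPbz, hΔ1, Matrix.mulVec_sub]
      calc M.y T 1 w = M.Pbetaperp *ᵥ M.y T 1 w + M.Pbeta *ᵥ M.y T 1 w := (hsplit _).symm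
        _ = _ := by abel
    · intro n hn ih
      beta_reduce
      beta_reduce at ih
      have hIcc : Finset.Icc (1:ℤ) (n+1) = insert (n+1) (Finset.Icc 1 n) := by
        ext x
        simp only [Finset.mem_Icc, Finset.mem_insert]
        omega
      have hnotmem : (n+1) ∉ Finset.Icc (1:ℤ) n := by
        simp only [Finset.mem_Icc]
        omega
      have hyn : M.y T (n+1) w = M.y T n w + M.Δy T (n+1) w := by
        have h := hΔdef T (n+1) w
        have h2 : (n:ℤ) + 1 - 1 = n := by ring
        rw [h2] at h
        rw [h]; abel
      rw [hIcc, Finset.sum_insert hnotmem, Matrix.mulVec_add, hyn, ih,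
        ← hsplit (M.Δy T (n+1) w), hPpz T (n+1) w, hPbz T (n+1) w, hyn, Matrix.mulVec_add,
        hPbz T n w]
      abel
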